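/- arXiv:1510.00251 — 4 statements merged into one kernel-verified Lean document; each statement's English description precedes it below -/
import Mathlib

section
/- (Partition principle.) Let $N \in \mathbb{N}$ and let $[0,1]^d = \bigcup_{i=1}^N \Omega_i$ be a partition into Lebesgue-measurable sets with $|\Omega_i| = 1/N$ for every $i$. Let $\mathcal{P}_\Omega$ be the random point set obtained by choosing one point independently from each $\Omega_i$ according to normalized Lebesgue measure on $\Omega_i$, and let $\mathcal{P}_N$ be a set of $N$ points chosen independently and uniformly at random from $[0,1]^d$. Then $\mathbb{E}\, \mathcal{L}_2(\mathcal{P}_\Omega)^2 \le \mathbb{E}\, \mathcal{L}_2(\mathcal{P}_N)^2$. -/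
open MeasureTheory
open scoped ENNReal

/-- The uniform probability measure on a subset of `ℝ^d`
(Lebesgue measure restricted to the set and normalized). -/
noncomputable def uMeas {d : ℕ} (s : Set (Fin d → ℝ)) : Measure (Fin d → ℝ) :=
  (volume s)⁻¹ • volume.restrict s

/-- The unit cube `[0,1]^d`. -/
def unitCube (d : ℕ) : Set (Fin d → ℝ) := Set.univ.pi fun _ => Set.Icc (0:ℝ) 1

/-- The anchored box `[0,x] = ∏_j [0, x_j]`. -/
def box {d : ℕ} (x : Fin d → ℝ) : Set (Fin d → ℝ) := Set.univ.pi fun j => Set.Icc 0 (x j)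

open Classical in
/-- The squared `L²`-discrepancy of a finite point configuration in `[0,1]^d`. -/
noncomputable def L2sq {ι : Type*} [Fintype ι] {d : ℕ} (P : ι → (Fin d → ℝ)) : ℝ :=
  ∫ x in unitCube d,
    |((Finset.univ.filter fun i => P i ∈ box x).card : ℝ) / (Fintype.card ι : ℝ) -
      (volume (box x)).toReal| ^ 2

section helpers

lemma integral_pi_prod {ι : Type*} [Fintype ι] {α : Type*} [MeasurableSpace α]
    (μ : ι → Measure α) [h : ∀ i, SigmaFinite (μ i)] (f : ι → α → ℝ) :
    ∫ x, ∏ i, f i (x i) ∂Measure.pi μ = ∏ i, ∫ y, f i y ∂μ i :=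
  MeasureTheory.integral_fintype_prod_eq_prod (E := fun _ : ι => α) f (μ := μ)

lemma integral_pi_eval {ι : Type*} [Fintype ι] [DecidableEq ι] {α : Type*} [MeasurableSpace α]
    (μ : ι → Measure α) [∀ i, IsProbabilityMeasure (μ i)] (f : α → ℝ) (i : ι) :
    ∫ x, f (x i) ∂Measure.pi μ = ∫ y, f y ∂μ i := by
  have h := integral_pi_prod μ (fun k a => if k = i then f a else 1)
  have e : ∀ k, ∫ y, (if k = i then f y else 1) ∂μ k = if k = i then ∫ y, f y ∂μ k else 1 := by
    intro k; split <;> simp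
  simp only [e] at h
  simpa using h

lemma integral_pi_eval_mul {ι : Type*} [Fintype ι] [DecidableEq ι] {α : Type*} [MeasurableSpace α]
    (μ : ι → Measure α) [∀ i, IsProbabilityMeasure (μ i)] (f g : α → ℝ) {i j : ι} (hij : i ≠ j) :
    ∫ x, f (x i) * g (x j) ∂Measure.pi μ = (∫ y, f y ∂μ i) * ∫ y, g y ∂μ j := by
  have h := integral_pi_prod μ (fun k a => if k = i then f a else if k = j then g a else 1)
  have e1 : ∀ x : ι → α, (∏ k, (if k = i then f (x k) else if k = j then g (x k) else 1))
      = f (x i) * g (x j) := by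
    intro x
    rw [← Finset.prod_subset (Finset.subset_univ {i, j})]
    · rw [Finset.prod_pair hij]; simp [hij, hij.symm]
    · intro k _ hk
      simp only [Finset.mem_insert, Finset.mem_singleton, not_or] at hk
      simp [hk.1, hk.2]
  have e2 : (∏ k, ∫ y, (if k = i then f y else if k = j then g y else 1) ∂μ k)
      = (∫ y, f y ∂μ i) * ∫ y, g y ∂μ j := by
    rw [← Finset.prod_subset (Finset.subset_univ {i, j})]
    · rw [Finset.prod_pair hij]; simp [hij, hij.symm]
    · intro k _ hk
      simp only [Finset.mem_insert, Finset.mem_singleton, not_or] at hk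
      simp [hk.1, hk.2]
  simp only [e1, e2] at h
  exact h

lemma exp_sq {α : Type*} [MeasurableSpace α] {N : ℕ} (hN : 0 < N)
    (μ : Fin N → Measure α) [∀ i, IsProbabilityMeasure (μ i)]
    {s : Set α} (hs : MeasurableSet s) (b : ℝ) :
    ∫ P : Fin N → α, ((∑ i, (s.indicator (fun _ => (1:ℝ)) (P i))) / (N : ℝ) - b) ^ 2
        ∂Measure.pi μ
      = ((∑ i, (μ i s).toReal) - ∑ i, ((μ i s).toReal) ^ 2) / (N:ℝ)^2
        + ((∑ i, (μ i s).toReal) / N - b) ^ 2 := by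
  set X : α → ℝ := s.indicator (fun _ => (1:ℝ)) with hX
  have hXm : Measurable X := measurable_const.indicator hs
  have hXbd : ∀ a, ‖X a‖ ≤ 1 := by
    intro a
    by_cases h : a ∈ s <;>
      simp [hX, Set.indicator_of_mem, Set.indicator_of_notMem, h]
  have hXsq : ∀ a, X a * X a = X a := by
    intro a
    by_cases h : a ∈ s <;>
      simp [hX, Set.indicator_of_mem, Set.indicator_of_notMem, h]
  have hint : ∀ i, ∫ y, X y ∂μ i = (μ i s).toReal := by
    intro i
    rw [hX, integral_indicator_const _ hs]
    simp [measureReal_def]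
  have hI1 : ∀ i, Integrable (fun P : Fin N → α => X (P i)) (Measure.pi μ) := by
    intro i
    exact (integrable_const (1:ℝ)).mono'
      ((hXm.comp (measurable_pi_apply i)).aestronglyMeasurable)
      (Filter.Eventually.of_forall fun P => hXbd (P i))
  have hI2 : ∀ i j, Integrable (fun P : Fin N → α => X (P i) * X (P j)) (Measure.pi μ) := by
    intro i j
    refine (integrable_const (1:ℝ)).mono'
      (((hXm.comp (measurable_pi_apply i)).mul
        (hXm.comp (measurable_pi_apply j))).aestronglyMeasurable)
      (Filter.Eventually.of_forall fun P => ?_)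
    calc ‖X (P i) * X (P j)‖ = ‖X (P i)‖ * ‖X (P j)‖ := norm_mul _ _
      _ ≤ 1 * 1 := mul_le_mul (hXbd _) (hXbd _) (norm_nonneg _) zero_le_one
      _ = 1 := mul_one 1
  have hIsum : Integrable (fun P : Fin N → α => ∑ i, X (P i)) (Measure.pi μ) :=
    integrable_finset_sum _ fun i _ => hI1 i
  have hIsumsq : Integrable (fun P : Fin N → α => ∑ i, ∑ j, X (P i) * X (P j))
      (Measure.pi μ) :=
    integrable_finset_sum _ fun i _ => integrable_finset_sum _ fun j _ => hI2 i j
  have hA : ∫ P : Fin N → α, (∑ i, X (P i)) ∂Measure.pi μ = ∑ i, (μ i s).toReal := by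
    rw [integral_finset_sum _ fun i _ => hI1 i]
    exact Finset.sum_congr rfl fun i _ => by rw [integral_pi_eval μ X i, hint i]
  have hB : ∫ P : Fin N → α, (∑ i, ∑ j, X (P i) * X (P j)) ∂Measure.pi μ
      = (∑ i, (μ i s).toReal) * (∑ i, (μ i s).toReal)
        + ((∑ i, (μ i s).toReal) - ∑ i, ((μ i s).toReal)^2) := by
    rw [integral_finset_sum _ fun i _ => integrable_finset_sum _ fun j _ => hI2 i j]
    have e : ∀ i : Fin N, ∫ P : Fin N → α, (∑ j, X (P i) * X (P j)) ∂Measure.pi μ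
        = (μ i s).toReal * (∑ j, (μ j s).toReal)
          + ((μ i s).toReal - ((μ i s).toReal)^2) := by
      intro i
      rw [integral_finset_sum _ fun j _ => hI2 i j]
      have e2 : ∀ j : Fin N, ∫ P : Fin N → α, X (P i) * X (P j) ∂Measure.pi μ
          = (μ i s).toReal * (μ j s).toReal
            + (if i = j then (μ i s).toReal - ((μ i s).toReal)^2 else 0) := by
        intro j
        by_cases hij : i = j
        · subst hij
          simp only [hXsq]
          rw [integral_pi_eval μ X i, hint i]
          simp only [eq_self_iff_true, if_true]
          ring
        · rw [integral_pi_eval_mul μ X X hij, hint i, hint j, if_neg hij]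
          ring
      simp only [e2]
      rw [Finset.sum_add_distrib, ← Finset.mul_sum, Finset.sum_ite_eq,
        if_pos (Finset.mem_univ i)]
    simp only [e]
    rw [Finset.sum_add_distrib, ← Finset.sum_mul, Finset.sum_sub_distrib]
  have hexp : ∀ P : Fin N → α,
      ((∑ i, X (P i)) / (N : ℝ) - b) ^ 2
        = (∑ i, ∑ j, X (P i) * X (P j)) * (1 / (N:ℝ)^2)
          + ((∑ i, X (P i)) * (-(2*b) / N) + b^2) := by
    intro P
    rw [← Finset.sum_mul_sum]
    have hNne : (N:ℝ) ≠ 0 := Nat.cast_ne_zero.mpr hN.ne'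
    field_simp
    ring
  simp only [hexp]
  have hg : Integrable (fun P : Fin N → α => (∑ i, X (P i)) * (-(2*b)/(N:ℝ)) + b^2)
      (Measure.pi μ) := (hIsum.mul_const _).add (integrable_const _)
  rw [integral_add (hIsumsq.mul_const _) hg,
    integral_add (hIsum.mul_const _) (integrable_const _),
    integral_mul_const, integral_mul_const, hA, hB, integral_const]
  have hNne : (N:ℝ) ≠ 0 := Nat.cast_ne_zero.mpr hN.ne'
  simp only [measure_univ, probReal_univ, ENNReal.toReal_one, smul_eq_mul, one_mul]
  field_simp
  ring

end helpers

/-- **Partition principle.** For any partition of `[0,1]^d` into `N` measurable sets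
of measure `1/N`, the associated jittered sampling set (one independent point chosen
from each `Ω i` according to normalized Lebesgue measure) has expected squared
`L²`-discrepancy at most that of `N` independent uniform points in `[0,1]^d`. -/
theorem partition_principle (d N : ℕ) (hN : 0 < N) (Ω : Fin N → Set (Fin d → ℝ))
    (hmeas : ∀ i, MeasurableSet (Ω i))
    (hvol : ∀ i, volume (Ω i) = 1 / (N : ℝ≥0∞))
    (hdisj : Pairwise (Function.onFun Disjoint Ω))
    (hcover : ⋃ i, Ω i = unitCube d) :
    ∫ P, L2sq P ∂ Measure.pi (fun i => uMeas (Ω i)) ≤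
      ∫ P, L2sq P ∂ Measure.pi (fun _ : Fin N => uMeas (unitCube d)) := by
  classical
  have hNne : (N:ℝ) ≠ 0 := Nat.cast_ne_zero.mpr hN.ne'
  have hN0 : (N : ℝ≥0∞) ≠ 0 := Nat.cast_ne_zero.mpr hN.ne'
  have hNtop : (N : ℝ≥0∞) ≠ ⊤ := ENNReal.natCast_ne_top N
  have hcube_meas : MeasurableSet (unitCube d) :=
    MeasurableSet.univ_pi fun _ => measurableSet_Icc
  have hcube_vol : volume (unitCube d) = 1 := by
    rw [unitCube, volume_pi_pi]
    simp [Real.volume_Icc]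
  have hbox_meas : ∀ x : Fin d → ℝ, MeasurableSet (box x) :=
    fun x => MeasurableSet.univ_pi fun _ => measurableSet_Icc
  have hbox_vol : ∀ x : Fin d → ℝ, volume (box x) = ∏ j, ENNReal.ofReal (x j) := by
    intro x
    rw [box, volume_pi_pi]
    simp [Real.volume_Icc]
  -- probability measure instances
  haveI hP1 : ∀ i, IsProbabilityMeasure (uMeas (Ω i)) := by
    intro i
    constructor
    rw [uMeas, Measure.smul_apply, Measure.restrict_apply_univ, hvol i, smul_eq_mul, one_div,
      ENNReal.inv_mul_cancel (ENNReal.inv_ne_zero.mpr hNtop) (ENNReal.inv_ne_top.mpr hN0)]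
  haveI hP2 : IsProbabilityMeasure (uMeas (unitCube d)) := by
    constructor
    rw [uMeas, Measure.smul_apply, Measure.restrict_apply_univ, hcube_vol]
    simp
  set ν : Measure (Fin d → ℝ) := volume.restrict (unitCube d) with hν
  haveI : IsFiniteMeasure ν := ⟨by rw [hν, Measure.restrict_apply_univ, hcube_vol]; simp⟩
  -- the integrand as a function of (P, x)
  set F : (Fin N → (Fin d → ℝ)) → (Fin d → ℝ) → ℝ := fun P x =>
    ((∑ i, (box x).indicator (fun _ => (1:ℝ)) (P i)) / (N:ℝ) - (volume (box x)).toReal) ^ 2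
    with hF
  -- L2sq as an integral of F
  have hL2 : ∀ P : Fin N → (Fin d → ℝ), L2sq P = ∫ x, F P x ∂ν := by
    intro P
    rw [L2sq]
    refine integral_congr_ae (Filter.Eventually.of_forall fun x => ?_)
    simp only [hF, sq_abs]
    have hc : ((Finset.univ.filter fun i => P i ∈ box x).card : ℝ)
        = ∑ i, (box x).indicator (fun _ => (1:ℝ)) (P i) := by
      rw [Finset.card_filter]
      push_cast
      refine Finset.sum_congr rfl fun i _ => ?_
      by_cases h : P i ∈ box x <;> simp [h]
    rw [hc, Fintype.card_fin]
  -- joint measurability of F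
  have hFmeas : Measurable (Function.uncurry F) := by
    have hS : ∀ i : Fin N,
        MeasurableSet {z : (Fin N → (Fin d → ℝ)) × (Fin d → ℝ) | z.1 i ∈ box z.2} := by
      intro i
      have : {z : (Fin N → (Fin d → ℝ)) × (Fin d → ℝ) | z.1 i ∈ box z.2}
          = ⋂ j, ({z | 0 ≤ z.1 i j} ∩ {z | z.1 i j ≤ z.2 j}) := by
        ext z
        simp [box, Set.mem_pi, Set.mem_Icc, Set.mem_iInter, forall_and, Pi.le_def]
      rw [this]
      refine MeasurableSet.iInter fun j => (MeasurableSet.inter ?_ ?_)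
      all_goals
        have hm1 : Measurable fun z : (Fin N → (Fin d → ℝ)) × (Fin d → ℝ) => z.1 i j :=
          (measurable_pi_apply j).comp ((measurable_pi_apply i).comp measurable_fst)
        have hm2 : Measurable fun z : (Fin N → (Fin d → ℝ)) × (Fin d → ℝ) => z.2 j :=
          (measurable_pi_apply j).comp measurable_snd
      · exact measurableSet_le measurable_const hm1
      · exact measurableSet_le hm1 hm2
    have hind : ∀ i : Fin N, Measurable (fun z : (Fin N → (Fin d → ℝ)) × (Fin d → ℝ) =>
        (box z.2).indicator (fun _ => (1:ℝ)) (z.1 i)) := by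
      intro i
      have : (fun z : (Fin N → (Fin d → ℝ)) × (Fin d → ℝ) =>
          (box z.2).indicator (fun _ => (1:ℝ)) (z.1 i))
          = ({z : (Fin N → (Fin d → ℝ)) × (Fin d → ℝ) | z.1 i ∈ box z.2}).indicator
              (fun _ => (1:ℝ)) := by
        funext z
        by_cases h : z.1 i ∈ box z.2 <;>
          simp [Set.indicator_of_mem, Set.indicator_of_notMem, h]
      rw [this]
      exact measurable_const.indicator (hS i)
    have hb : Measurable (fun z : (Fin N → (Fin d → ℝ)) × (Fin d → ℝ) =>
        (volume (box z.2)).toReal) := by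
      have : (fun z : (Fin N → (Fin d → ℝ)) × (Fin d → ℝ) => (volume (box z.2)).toReal)
          = fun z => (∏ j, ENNReal.ofReal (z.2 j)).toReal := by
        funext z; rw [hbox_vol]
      rw [this]
      exact ENNReal.measurable_toReal.comp
        (Finset.measurable_prod _ fun j _ =>
          ENNReal.measurable_ofReal.comp ((measurable_pi_apply j).comp measurable_snd))
    have : Function.uncurry F = fun z : (Fin N → (Fin d → ℝ)) × (Fin d → ℝ) =>
        ((∑ i, (box z.2).indicator (fun _ => (1:ℝ)) (z.1 i)) / (N:ℝ)
          - (volume (box z.2)).toReal) ^ 2 := rfl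
    rw [this]
    exact (((Finset.measurable_sum _ fun i _ => hind i).div_const _).sub hb).pow_const 2
  -- boundedness, a.e. on the product
  have hbound : ∀ (π : Measure (Fin N → (Fin d → ℝ))) [IsProbabilityMeasure π],
      Integrable (Function.uncurry F) (π.prod ν) := by
    intro π _
    have hae : ∀ᵐ z : (Fin N → (Fin d → ℝ)) × (Fin d → ℝ) ∂(π.prod ν),
        z.2 ∈ unitCube d := by
      rw [ae_iff]
      have he : {z : (Fin N → (Fin d → ℝ)) × (Fin d → ℝ) | ¬ z.2 ∈ unitCube d}
          = Set.univ ×ˢ (unitCube d)ᶜ := by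
        ext z; simp [Set.mem_prod]
      rw [he, Measure.prod_prod, hν, Measure.restrict_apply hcube_meas.compl]
      simp
    refine (integrable_const (1:ℝ)).mono' hFmeas.aestronglyMeasurable
      (hae.mono fun z hz => ?_)
    have hsum0 : 0 ≤ ∑ i, (box z.2).indicator (fun _ => (1:ℝ)) (z.1 i) :=
      Finset.sum_nonneg fun i _ => Set.indicator_nonneg (fun _ _ => zero_le_one) _
    have hsum1 : ∑ i, (box z.2).indicator (fun _ => (1:ℝ)) (z.1 i) ≤ N := by
      calc ∑ i, (box z.2).indicator (fun _ => (1:ℝ)) (z.1 i)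
          ≤ ∑ _i : Fin N, (1:ℝ) := Finset.sum_le_sum fun i _ => by
            by_cases h : z.1 i ∈ box z.2 <;> simp [h]
        _ = N := by simp
    have ha : (∑ i, (box z.2).indicator (fun _ => (1:ℝ)) (z.1 i)) / (N:ℝ) ∈
        Set.Icc (0:ℝ) 1 := by
      constructor
      · positivity
      · rw [div_le_one (by positivity)]
        exact hsum1
    have hb0 : (0:ℝ) ≤ (volume (box z.2)).toReal := ENNReal.toReal_nonneg
    have hb1 : (volume (box z.2)).toReal ≤ 1 := by
      have hsub : box z.2 ⊆ unitCube d := by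
        intro y hy
        intro j _
        have h1 := hy j (Set.mem_univ j)
        have h2 := hz j (Set.mem_univ j)
        exact ⟨h1.1, h1.2.trans h2.2⟩
      have : volume (box z.2) ≤ volume (unitCube d) := measure_mono hsub
      rw [hcube_vol] at this
      calc (volume (box z.2)).toReal ≤ (1 : ℝ≥0∞).toReal :=
            ENNReal.toReal_mono (by simp) this
        _ = 1 := by simp
    have h1 : |(∑ i, (box z.2).indicator (fun _ => (1:ℝ)) (z.1 i)) / (N:ℝ)
        - (volume (box z.2)).toReal| ≤ 1 := by
      rw [abs_sub_le_iff]
      constructor <;>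
        · have := ha.1; have := ha.2; linarith
    calc ‖Function.uncurry F z‖
        = |(∑ i, (box z.2).indicator (fun _ => (1:ℝ)) (z.1 i)) / (N:ℝ)
          - (volume (box z.2)).toReal| ^ 2 := by
          rw [show Function.uncurry F z
            = ((∑ i, (box z.2).indicator (fun _ => (1:ℝ)) (z.1 i)) / (N:ℝ)
              - (volume (box z.2)).toReal) ^ 2 from rfl]
          rw [Real.norm_eq_abs, abs_pow, sq_abs, ← sq_abs]
      _ ≤ 1 ^ 2 := pow_le_pow_left₀ (abs_nonneg _) h1 2
      _ = 1 := one_pow 2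
  -- Fubini on both sides
  have hswap : ∀ (π : Measure (Fin N → (Fin d → ℝ))) [IsProbabilityMeasure π],
      ∫ P, L2sq P ∂π = ∫ x, ∫ P, F P x ∂π ∂ν := by
    intro π _
    calc ∫ P, L2sq P ∂π = ∫ P, ∫ x, F P x ∂ν ∂π := by
          refine integral_congr_ae (Filter.Eventually.of_forall fun P => ?_)
          exact hL2 P
      _ = ∫ x, ∫ P, F P x ∂π ∂ν := integral_integral_swap (hbound π)
  rw [hswap, hswap]
  -- pointwise comparison of inner integrals
  have hinner : ∀ x : Fin d → ℝ,
      ∫ P, F P x ∂Measure.pi (fun i => uMeas (Ω i)) ≤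
        ∫ P, F P x ∂Measure.pi (fun _ : Fin N => uMeas (unitCube d)) := by
    intro x
    rw [hF]
    rw [exp_sq hN _ (hbox_meas x) _, exp_sq hN _ (hbox_meas x) _]
    set q : ℝ := ((uMeas (unitCube d)) (box x)).toReal with hq
    set p : Fin N → ℝ := fun i => ((uMeas (Ω i)) (box x)).toReal with hp
    have hsumpq : ∑ i, p i = N * q := by
      have h1 : ∀ i, (uMeas (Ω i)) (box x) = (N : ℝ≥0∞) * volume (box x ∩ Ω i) := by
        intro i
        rw [uMeas, Measure.smul_apply, Measure.restrict_apply (hbox_meas x), hvol i,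
          smul_eq_mul, one_div, inv_inv]
      have h2 : (uMeas (unitCube d)) (box x) = volume (box x ∩ unitCube d) := by
        rw [uMeas, Measure.smul_apply, Measure.restrict_apply (hbox_meas x), hcube_vol]
        simp
      have h3 : volume (box x ∩ unitCube d) = ∑ i, volume (box x ∩ Ω i) := by
        rw [← hcover, Set.inter_iUnion, measure_iUnion _ fun i => (hbox_meas x).inter (hmeas i)]
        · exact tsum_fintype _
        · intro i j hij
          exact (hdisj hij).mono Set.inter_subset_right Set.inter_subset_right
      have hfin : ∀ i, volume (box x ∩ Ω i) ≠ ⊤ := by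
        intro i
        have : volume (box x ∩ Ω i) ≤ volume (Ω i) :=
          measure_mono Set.inter_subset_right
        rw [hvol i] at this
        exact (this.trans_lt (by simp [hN])).ne
      have hpi : ∀ i, p i = (N:ℝ) * (volume (box x ∩ Ω i)).toReal := by
        intro i
        show ((uMeas (Ω i)) (box x)).toReal = _
        rw [h1 i, ENNReal.toReal_mul]
        simp
      simp only [hpi]
      rw [← Finset.mul_sum, ← ENNReal.toReal_sum (fun i _ => hfin i), ← h3, hq, h2]
    have hCS : (N:ℝ) * q ^ 2 ≤ ∑ i, (p i) ^ 2 := by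
      have h := sq_sum_le_card_mul_sum_sq (s := Finset.univ) (f := p)
      rw [hsumpq, Finset.card_univ, Fintype.card_fin] at h
      have hNpos : (0:ℝ) < N := by positivity
      nlinarith [h]
    have hq2 : ∑ i : Fin N, ((uMeas (unitCube d)) (box x)).toReal = N * q := by
      rw [← hq, Finset.sum_const, Finset.card_univ, Fintype.card_fin, nsmul_eq_mul]
    have hq3 : ∑ i : Fin N, (((uMeas (unitCube d)) (box x)).toReal) ^ 2 = N * q ^ 2 := by
      rw [← hq, Finset.sum_const, Finset.card_univ, Fintype.card_fin, nsmul_eq_mul]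
    rw [hq2, hq3]
    have hsum' : ∑ i : Fin N, (((uMeas (Ω i)) (box x)).toReal) = N * q := hsumpq
    rw [hsum']
    have : ∑ i : Fin N, (((uMeas (Ω i)) (box x)).toReal) ^ 2 = ∑ i, (p i)^2 := rfl
    rw [this]
    have hN2 : (0:ℝ) < (N:ℝ)^2 := by positivity
    gcongr
  -- integrate out
  refine integral_mono ?_ ?_ hinner
  · exact (hbound (Measure.pi fun i => uMeas (Ω i))).integral_prod_right
  · exact (hbound (Measure.pi fun _ : Fin N => uMeas (unitCube d))).integral_prod_right
end

section
/- Let $n \in \mathbb{N}$ and let $X_1, \dots, X_d$ be independent real-valued random variables, each satisfying $\mathbb{E}\, e^{t X_j} \le 1 + \sqrt{2\pi}\, \frac{t}{\sqrt{n}}\, \exp\big( \frac{t^2}{8n} \big)$ for every $t > 0$. Let $S_d = X_1 + \dots + X_d$. Then for every $y > 0$, $\mathbb{P}(S_d \ge y) \le \big( 1 + \frac{\sqrt{32 \pi n}}{d}\, y \big)^d \exp\big( -\frac{2 n y^2}{d} \big)$. -/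
open MeasureTheory ProbabilityTheory

/-- **Adapted Bernstein inequality.** Let `X 1, …, X d` be independent real random
variables, each with exponential moments bounded by
`𝔼 exp(t X j) ≤ 1 + √(2π)·(t/√n)·exp(t²/(8n))` for all `t > 0`. Then the sum
`S_d = X 1 + ⋯ + X d` satisfies, for every `y > 0`,
`ℙ(S_d ≥ y) ≤ (1 + (√(32πn)/d)·y)^d · exp(-2ny²/d)`. -/
theorem adapted_bernstein {Ω : Type*} [MeasurableSpace Ω] (μ : Measure Ω)
    [IsProbabilityMeasure μ] (n : ℕ) (hn : 0 < n) (d : ℕ) (hd : 0 < d)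
    (X : Fin d → Ω → ℝ) (hmeas : ∀ j, Measurable (X j))
    (hindep : iIndepFun X μ)
    (hint : ∀ j, ∀ t : ℝ, 0 < t → Integrable (fun ω => Real.exp (t * X j ω)) μ)
    (hmom : ∀ j, ∀ t : ℝ, 0 < t →
      (∫ ω, Real.exp (t * X j ω) ∂μ) ≤
        1 + Real.sqrt (2 * Real.pi) * (t / Real.sqrt n) * Real.exp (t ^ 2 / (8 * n)))
    (y : ℝ) (hy : 0 < y) :
    μ {ω | y ≤ ∑ j, X j ω} ≤
      ENNReal.ofReal ((1 + Real.sqrt (32 * Real.pi * n) / d * y) ^ d *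
        Real.exp (-(2 * n * y ^ 2) / d)) := by
  have hdpos : (0:ℝ) < d := by exact_mod_cast hd
  have hnpos : (0:ℝ) < n := by exact_mod_cast hn
  set t : ℝ := 4 * n * y / d with ht_def
  have ht : 0 < t := by positivity
  set S : Ω → ℝ := ∑ j, X j with hS
  have hSapp : ∀ ω, S ω = ∑ j, X j ω := fun ω => by simp [hS]
  have hset : {ω | y ≤ ∑ j, X j ω} = {ω | y ≤ S ω} := by
    ext ω; simp [hSapp]
  have hintS : Integrable (fun ω => Real.exp (t * S ω)) μ :=
    hindep.integrable_exp_mul_sum hmeas (fun i _ => hint i t ht)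
  have hcher : (μ {ω | y ≤ S ω}).toReal ≤ Real.exp (-t * y) * mgf S μ t :=
    measure_ge_le_exp_mul_mgf y ht.le hintS
  have hmgfS : mgf S μ t = ∏ j, mgf (X j) μ t := hindep.mgf_sum hmeas Finset.univ
  -- constants
  set A : ℝ := Real.sqrt (32 * Real.pi * n) / d * y with hA
  set B : ℝ := 2 * n * y ^ 2 / d ^ 2 with hB
  have hA0 : 0 ≤ A := by positivity
  have hB0 : 0 ≤ B := by positivity
  -- each mgf bounded
  have hkey : ∀ j, mgf (X j) μ t ≤ (1 + A) * Real.exp B := by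
    intro j
    have h1 := hmom j t ht
    have hsqrtn : Real.sqrt (n:ℝ) * Real.sqrt (n:ℝ) = (n:ℝ) := Real.mul_self_sqrt hnpos.le
    have hs0 : Real.sqrt (n:ℝ) ≠ 0 := by positivity
    have h32 : Real.sqrt (32 * Real.pi * n) = 4 * (Real.sqrt (2*Real.pi) * Real.sqrt n) := by
      rw [← Real.sqrt_mul (by positivity : (0:ℝ) ≤ 2*Real.pi)]
      rw [show 32 * Real.pi * (n:ℝ) = 4^2 * (2*Real.pi*(n:ℝ)) by ring]
      rw [Real.sqrt_mul (by positivity), Real.sqrt_sq (by norm_num)]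
    have hB' : t^2/(8*(n:ℝ)) = B := by rw [ht_def, hB]; field_simp; ring
    have hc : Real.sqrt (2*Real.pi) * (t / Real.sqrt n) = A := by
      rw [ht_def, hA, h32]
      field_simp
      first
      | linear_combination (4*Real.sqrt 2*Real.sqrt Real.pi*y*(d:ℝ)) * hsqrtn
      | linear_combination (-1 : ℝ) * hsqrtn
    have he : Real.sqrt (2 * Real.pi) * (t / Real.sqrt n) * Real.exp (t ^ 2 / (8 * n))
        = A * Real.exp B := by rw [hc, hB']
    calc mgf (X j) μ t ≤ 1 + A * Real.exp B := by rw [← he]; exact h1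
      _ ≤ (1 + A) * Real.exp B := by
          have h2 : (1:ℝ) ≤ Real.exp B := Real.one_le_exp hB0
          nlinarith [Real.exp_pos B]
  have hprod : mgf S μ t ≤ ((1 + A) * Real.exp B) ^ d := by
    rw [hmgfS]
    calc (∏ j, mgf (X j) μ t) ≤ ∏ _j : Fin d, (1 + A) * Real.exp B :=
          Finset.prod_le_prod (fun j _ => mgf_nonneg) (fun j _ => hkey j)
      _ = ((1 + A) * Real.exp B) ^ d := by simp
  have hfinal : Real.exp (-t * y) * mgf S μ t
      ≤ (1 + A) ^ d * Real.exp (-(2 * n * y ^ 2) / d) := by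
    calc Real.exp (-t * y) * mgf S μ t
        ≤ Real.exp (-t * y) * ((1 + A) * Real.exp B) ^ d := by
          exact mul_le_mul_of_nonneg_left hprod (Real.exp_pos _).le
      _ = (1 + A) ^ d * (Real.exp (-t * y) * Real.exp B ^ d) := by
          rw [mul_pow]; ring
      _ = (1 + A) ^ d * Real.exp (-(2 * n * y ^ 2) / d) := by
          rw [← Real.exp_nat_mul, ← Real.exp_add]
          congr 2
          rw [ht_def, hB]
          field_simp
          ring
  rw [hset]
  have hμfin : μ {ω | y ≤ S ω} ≠ ⊤ := measure_ne_top μ _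
  rw [← ENNReal.ofReal_toReal hμfin]
  exact ENNReal.ofReal_le_ofReal (hcher.trans hfinal)
end

section
/- Let $N \in \mathbb{N}$ and let $[0,1]^d = \bigcup_{i=1}^N \Omega_i$ be a partition into Lebesgue-measurable sets with $|\Omega_i| = 1/N$ for every $i$. Let $\mathcal{P}_\Omega$ be the random point set obtained by choosing one point independently from each $\Omega_i$ according to normalized Lebesgue measure, and let $\mathcal{P}_N$ be $N$ points chosen independently and uniformly at random from $[0,1]^d$. Then for every $\mathbf{x} \in [0,1]^d$, $\mathrm{Var}\big( \#(\mathcal{P}_\Omega \cap [0,\mathbf{x}]) \big) \le \mathrm{Var}\big( \#(\mathcal{P}_N \cap [0,\mathbf{x}]) \big) = N\, |[0,\mathbf{x}]|\, (1 - |[0,\mathbf{x}]|)$. -/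
open MeasureTheory
open scoped ENNReal

section aux
variable {ι : Type*} [Fintype ι] {α : ι → Type*} [∀ i, MeasurableSpace (α i)]
  (μ : ∀ i, Measure (α i)) [∀ i, IsProbabilityMeasure (μ i)]

lemma pi_eval_measure (i : ι) {A : Set (α i)} (hA : MeasurableSet A) :
    Measure.pi μ ((fun P => P i) ⁻¹' A) = μ i A := by
  classical
  have h : (fun P : ∀ j, α j => P i) ⁻¹' A
      = Set.pi Set.univ (Function.update (fun j => (Set.univ : Set (α j))) i A) :=
    Set.eval_preimage
  rw [h, Measure.pi_pi]
  rw [Finset.prod_eq_single i (fun j _ hj => by simp [Function.update_of_ne hj])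
    (fun h => absurd (Finset.mem_univ i) h)]
  simp

lemma pi_biInter_eval (S : Finset ι) (sets : ∀ i, Set (α i))
    (H : ∀ i ∈ S, MeasurableSet (sets i)) :
    Measure.pi μ (⋂ i ∈ S, (fun P : ∀ j, α j => P i) ⁻¹' sets i)
      = ∏ i ∈ S, μ i (sets i) := by
  classical
  have h : (⋂ i ∈ S, (fun P : ∀ j, α j => P i) ⁻¹' sets i)
      = Set.pi Set.univ (fun i => if i ∈ S then sets i else Set.univ) := by
    ext P
    simp only [Set.mem_iInter, Set.mem_preimage, Set.mem_pi, Set.mem_univ, true_implies]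
    constructor
    · intro hP i; by_cases hi : i ∈ S <;> simp [hi, hP i]
    · intro hP i hi; have := hP i; simpa [hi] using this
  rw [h, Measure.pi_pi]
  rw [show (∏ i, μ i (if i ∈ S then sets i else Set.univ))
      = ∏ i, (if i ∈ S then μ i (sets i) else 1) from
    Finset.prod_congr rfl fun i _ => by split_ifs <;> simp]
  rw [Finset.prod_ite_mem Finset.univ S, Finset.univ_inter]

lemma iIndepFun_eval :
    ProbabilityTheory.iIndepFun
      (fun (i : ι) (P : ∀ j, α j) => P i) (Measure.pi μ) := by
  rw [ProbabilityTheory.iIndepFun_iff_measure_inter_preimage_eq_mul]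
  intro S sets H
  rw [pi_biInter_eval μ S sets H]
  exact Finset.prod_congr rfl fun i hi => (pi_eval_measure μ i (H i hi)).symm

end aux

lemma variance_indicator {Ω : Type*} [MeasurableSpace Ω] (μ : Measure Ω)
    [IsProbabilityMeasure μ] {A : Set Ω} (hA : MeasurableSet A) :
    ProbabilityTheory.variance (A.indicator fun _ => (1:ℝ)) μ
      = (μ A).toReal - (μ A).toReal ^ 2 := by
  have hmem : MemLp (A.indicator fun _ => (1:ℝ)) 2 μ :=
    memLp_indicator_const 2 hA 1 (Or.inr (measure_ne_top μ A))
  rw [ProbabilityTheory.variance_eq_sub hmem]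
  have h2 : (A.indicator fun _ => (1:ℝ)) ^ 2 = A.indicator fun _ => (1:ℝ) := by
    ext y; by_cases h : y ∈ A <;> simp [h]
  rw [h2, integral_indicator_const _ hA]
  simp [smul_eq_mul, measureReal_def]

lemma variance_count {ι : Type*} [Fintype ι] {α : Type*} [MeasurableSpace α]
    (μ : ι → Measure α) [∀ i, IsProbabilityMeasure (μ i)] {A : Set α}
    (hA : MeasurableSet A) :
    ProbabilityTheory.variance
        (fun P : ι → α => ∑ i, A.indicator (fun _ => (1:ℝ)) (P i)) (Measure.pi μ)
      = ∑ i, ((μ i A).toReal - (μ i A).toReal ^ 2) := by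
  classical
  set f : ι → (ι → α) → ℝ := fun i P => ((fun P : ι → α => P i) ⁻¹' A).indicator
      (fun _ => (1:ℝ)) P with hf
  have hfi : ∀ i (P : ι → α), f i P = A.indicator (fun _ => (1:ℝ)) (P i) := by
    intro i P
    simp only [hf, Set.indicator]
    by_cases h : P i ∈ A <;> simp [h]
  have hfun : (fun P : ι → α => ∑ i, A.indicator (fun _ => (1:ℝ)) (P i))
      = ∑ i, f i := by
    funext P; rw [Finset.sum_apply]; exact (Finset.sum_congr rfl fun i _ => (hfi i P).symm)
  have hindep : ProbabilityTheory.iIndepFun f (Measure.pi μ) := by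
    have hfeq : f = fun i => (A.indicator (fun _ => (1:ℝ))) ∘ (fun P : ι → α => P i) := by
      funext i P; exact hfi i P
    rw [hfeq]
    exact (iIndepFun_eval μ).comp (fun i => A.indicator (fun _ => (1:ℝ)))
      (fun i => (measurable_const.indicator hA))
  have hmem : ∀ i ∈ Finset.univ, MemLp (f i) 2 (Measure.pi μ) := fun i _ =>
    memLp_indicator_const 2 (measurable_pi_apply i hA) 1 (Or.inr (measure_ne_top _ _))
  rw [hfun, ProbabilityTheory.IndepFun.variance_sum hmem
    (fun i _ j _ hij => hindep.indepFun hij)]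
  refine Finset.sum_congr rfl fun i _ => ?_
  rw [show f i = ((fun P : ι → α => P i) ⁻¹' A).indicator (fun _ => (1:ℝ)) from rfl,
    variance_indicator _ (measurable_pi_apply i hA)]
  rw [pi_eval_measure μ i hA]

lemma uMeas_isProb {d : ℕ} {s : Set (Fin d → ℝ)} (h0 : volume s ≠ 0) (ht : volume s ≠ ⊤) :
    IsProbabilityMeasure (uMeas s) := by
  constructor
  simp only [uMeas, Measure.smul_apply, Measure.restrict_apply MeasurableSet.univ,
    Set.univ_inter, smul_eq_mul]
  exact ENNReal.inv_mul_cancel h0 ht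

open Classical in
/-- For a partition of `[0,1]^d` into `N` measurable sets of measure `1/N`, the variance
of the number of jittered points in `[0,x]` is at most the corresponding variance for
`N` independent uniform points, which equals `N·|[0,x]|·(1 - |[0,x]|)`. -/
theorem partition_count_variance_le (d N : ℕ) (hN : 0 < N) (Ω : Fin N → Set (Fin d → ℝ))
    (hmeas : ∀ i, MeasurableSet (Ω i))
    (hvol : ∀ i, volume (Ω i) = 1 / (N : ℝ≥0∞))
    (hdisj : Pairwise (Function.onFun Disjoint Ω))
    (hcover : ⋃ i, Ω i = unitCube d)
    (x : Fin d → ℝ) (hx : x ∈ unitCube d) :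
    ProbabilityTheory.variance
        (fun P => ((Finset.univ.filter fun i => P i ∈ box x).card : ℝ))
        (Measure.pi (fun i => uMeas (Ω i))) ≤
      ProbabilityTheory.variance
        (fun P => ((Finset.univ.filter fun i => P i ∈ box x).card : ℝ))
        (Measure.pi (fun _ : Fin N => uMeas (unitCube d))) ∧
    ProbabilityTheory.variance
        (fun P => ((Finset.univ.filter fun i => P i ∈ box x).card : ℝ))
        (Measure.pi (fun _ : Fin N => uMeas (unitCube d))) =
      N * (volume (box x)).toReal * (1 - (volume (box x)).toReal) := by
  have hNne : (N : ℝ≥0∞) ≠ 0 := Nat.cast_ne_zero.mpr hN.ne'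
  have hNtop : (N : ℝ≥0∞) ≠ ⊤ := ENNReal.natCast_ne_top N
  have hboxm : MeasurableSet (box x) :=
    MeasurableSet.univ_pi fun j => measurableSet_Icc
  have hsub : box x ⊆ unitCube d := by
    apply Set.pi_mono
    intro j _
    exact Set.Icc_subset_Icc_right (hx j (Set.mem_univ j)).2
  have hcube : volume (unitCube d) = 1 := by
    rw [unitCube, volume_pi_pi]
    simp [Real.volume_Icc]
  have hboxle : volume (box x) ≤ 1 := hcube ▸ measure_mono hsub
  have hboxtop : volume (box x) ≠ ⊤ := (lt_of_le_of_lt hboxle ENNReal.one_lt_top).ne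
  haveI : ∀ i : Fin N, IsProbabilityMeasure (uMeas (Ω i)) := fun i =>
    uMeas_isProb (by rw [hvol i]; simp [hNne, hNtop]) (by rw [hvol i]; simp [hNne])
  haveI : IsProbabilityMeasure (uMeas (unitCube d)) :=
    uMeas_isProb (by rw [hcube]; exact one_ne_zero) (by rw [hcube]; exact ENNReal.one_ne_top)
  -- rewrite the counting function
  have hXeq : (fun P : Fin N → (Fin d → ℝ) =>
      ((Finset.univ.filter fun i => P i ∈ box x).card : ℝ))
      = fun P => ∑ i, (box x).indicator (fun _ => (1:ℝ)) (P i) := by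
    funext P
    rw [Finset.card_filter]
    push_cast
    exact Finset.sum_congr rfl fun i _ => by by_cases h : P i ∈ box x <;> simp [h]
  rw [hXeq, variance_count _ hboxm, variance_count _ hboxm]
  -- values of the measures
  set p : ℝ := (volume (box x)).toReal with hp
  have hub : uMeas (unitCube d) (box x) = volume (box x) := by
    rw [uMeas, Measure.smul_apply, Measure.restrict_apply hboxm,
      Set.inter_eq_self_of_subset_left hsub, hcube]
    simp
  have hqi : ∀ i, uMeas (Ω i) (box x) = (N : ℝ≥0∞) * volume (box x ∩ Ω i) := by
    intro i
    rw [uMeas, Measure.smul_apply, Measure.restrict_apply hboxm, hvol i, smul_eq_mul,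
      one_div, inv_inv]
  have hsumq : ∑ i, uMeas (Ω i) (box x) = (N : ℝ≥0∞) * volume (box x) := by
    simp_rw [hqi]
    rw [← Finset.mul_sum]
    congr 1
    rw [← tsum_fintype (L := .unconditional _)]
    rw [← measure_iUnion (hdisj.mono fun i j h =>
        h.mono Set.inter_subset_right Set.inter_subset_right)
      (fun i => hboxm.inter (hmeas i))]
    rw [← Set.inter_iUnion, hcover, Set.inter_eq_self_of_subset_left hsub]
  set q : Fin N → ℝ := fun i => (uMeas (Ω i) (box x)).toReal with hq
  have hqne : ∀ i, uMeas (Ω i) (box x) ≠ ⊤ := fun i => measure_ne_top _ _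
  have hsumqr : ∑ i, q i = N * p := by
    rw [hq, ← ENNReal.toReal_sum (fun i _ => hqne i), hsumq, ENNReal.toReal_mul]
    simp [hp]
  have hqnn : ∀ i, 0 ≤ q i := fun i => ENNReal.toReal_nonneg
  have hRHS : ∑ _i : Fin N, (p - p ^ 2) = N * p - N * p ^ 2 := by
    rw [Finset.sum_const, Finset.card_univ, Fintype.card_fin, nsmul_eq_mul]
    ring
  constructor
  · -- variance comparison
    rw [hub]
    simp only [← hp]
    have hcs : (∑ i, q i) ^ 2 ≤ (N : ℝ) * ∑ i, q i ^ 2 := by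
      have := sq_sum_le_card_mul_sum_sq (s := Finset.univ) (f := q)
      simpa using this
    rw [hsumqr] at hcs
    have hNpos : (0:ℝ) < N := Nat.cast_pos.mpr hN
    have h1 : (N:ℝ) * p ^ 2 ≤ ∑ i, q i ^ 2 := by nlinarith
    rw [Finset.sum_sub_distrib, hsumqr, hRHS]
    linarith
  · -- variance of uniform points
    rw [hub]
    simp only [← hp]
    rw [hRHS]
    ring
end

section
/- Let $d, m \in \mathbb{N}$, $N = m^d$, and let $\mathcal{P}$ be a jittered sampling point set in $[0,1]^d$ (one point in each cube $\prod_{j=1}^d [\frac{k_j - 1}{m}, \frac{k_j}{m}]$, $\mathbf{k} \in \{1,\dots,m\}^d$). For $\mathbf{x} \in [0,1]^d$ and a string $L \in \{0,1\}^d$, define $A_L(\mathbf{x}) = \{ \mathbf{z} \in [0,\mathbf{x}] : \text{for all } 1 \le i \le d,\ \lfloor m z_i + 1 \rfloor = \lfloor m x_i + 1 \rfloor \text{ iff } L_i = 1 \}$. Then $\#(\mathcal{P} \cap A_L(\mathbf{x})) \le \prod_{j=1}^d \big( \text{if } L_j = 0 \text{ then } \lfloor m x_j + 1 \rfloor \text{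 else } 1 \big)$, and consequently $\#(\mathcal{P} \cap A_L(\mathbf{x})) \le m^{d - |L|}$, where $|L| = \sum_{i=1}^d L_i$. -/
open MeasureTheory

/-- The cube index `[x] := ⌊mx + 1⌋`, giving the coordinate (in `{1,…,m}`) of the
small cube of side `1/m` containing `x ∈ [0,1)`. -/
noncomputable def cidx (m : ℕ) (x : ℝ) : ℤ := ⌊(m : ℝ) * x + 1⌋

/-- The piece `A_L(x)` of the decomposition of `[0,x]`: points `z ∈ [0,x]` such that
`[z_i] = [x_i]` exactly at the coordinates `i` where `L_i = 1`. -/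
def AL {d : ℕ} (m : ℕ) (x : Fin d → ℝ) (L : Fin d → Bool) : Set (Fin d → ℝ) :=
  {z ∈ box x | ∀ i, (cidx m (z i) = cidx m (x i) ↔ L i = true)}

open Classical in
/-- **Counting bound for the pieces `A_L(x)`.** If `P` is a jittered sampling point
set (exactly one point with cube index `k` for each `k ∈ {1,…,m}^d`), then for every
`x ∈ [0,1]^d` and every string `L ∈ {0,1}^d`,
`#(𝒫 ∩ A_L(x)) ≤ ∏_j (if L_j = 0 then ⌊m x_j + 1⌋ else 1)`, and consequently
`#(𝒫 ∩ A_L(x)) ≤ m^(d - |L|)`. -/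
theorem count_in_AL_bound (d m : ℕ) (hm : 0 < m)
    (P : (Fin d → Fin m) → (Fin d → ℝ))
    (hP : ∀ k : Fin d → Fin m, ∀ i, cidx m (P k i) = (k i : ℤ) + 1)
    (x : Fin d → ℝ) (hx : ∀ i, x i ∈ Set.Icc (0:ℝ) 1) (L : Fin d → Bool) :
    (((Finset.univ.filter fun q : Fin d → Fin m => P q ∈ AL m x L).card : ℤ) ≤
        ∏ j, if L j = false then cidx m (x j) else 1) ∧
      (Finset.univ.filter fun q : Fin d → Fin m => P q ∈ AL m x L).card ≤
        m ^ (d - (Finset.univ.filter fun i => L i = true).card) := by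
  classical
  set c : Fin d → ℤ := fun i => cidx m (x i) with hc
  have hc1 : ∀ i, 1 ≤ c i := by
    intro i
    have h0 : (0:ℝ) ≤ (m:ℝ) * x i := mul_nonneg (by positivity) (hx i).1
    simp only [hc, cidx]
    rw [Int.le_floor]
    push_cast
    linarith
  set T : Fin d → Finset (Fin m) := fun i =>
    if L i = true then Finset.univ.filter (fun a : Fin m => (a:ℤ) + 1 = c i)
    else Finset.univ.filter (fun a : Fin m => (a:ℤ) + 1 < c i) with hT
  have hsub : (Finset.univ.filter fun q : Fin d → Fin m => P q ∈ AL m x L)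
      ⊆ Fintype.piFinset T := by
    intro q hq
    rw [Finset.mem_filter] at hq
    obtain ⟨-, hbox, hiff⟩ := hq
    rw [Fintype.mem_piFinset]
    intro i
    have hxi : P q i ≤ x i := (hbox i (Set.mem_univ i)).2
    have hle : cidx m (P q i) ≤ c i := by
      apply Int.floor_le_floor
      have : (m:ℝ) * P q i ≤ (m:ℝ) * x i :=
        mul_le_mul_of_nonneg_left hxi (by positivity)
      linarith
    simp only [hT]
    by_cases hL : L i = true
    · rw [if_pos hL, Finset.mem_filter]
      exact ⟨Finset.mem_univ _, by rw [← hP q i]; exact (hiff i).2 hL⟩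
    · rw [if_neg hL, Finset.mem_filter]
      refine ⟨Finset.mem_univ _, ?_⟩
      have hne : cidx m (P q i) ≠ c i := fun h => hL ((hiff i).1 h)
      have := hP q i
      omega
  have hcard : ∀ i, (T i).card ≤ (c i).toNat := by
    intro i
    simp only [hT]
    by_cases hL : L i = true
    · rw [if_pos hL]
      have h1 : (Finset.univ.filter (fun a : Fin m => (a:ℤ) + 1 = c i)).card ≤ 1 := by
        apply Finset.card_le_one.2
        intro a ha b hb
        rw [Finset.mem_filter] at ha hb
        have : (a:ℤ) = (b:ℤ) := by omega
        exact Fin.ext (by exact_mod_cast this)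
      have := hc1 i
      omega
    · rw [if_neg hL]
      calc (Finset.univ.filter (fun a : Fin m => (a:ℤ) + 1 < c i)).card
          ≤ (Finset.range (c i).toNat).card := by
            refine Finset.card_le_card_of_injOn (fun a : Fin m => (a:ℕ)) ?_ ?_
            · intro a ha
              rw [Finset.mem_coe, Finset.mem_filter] at ha
              rw [Finset.mem_coe, Finset.mem_range]
              show (a : ℕ) < (c i).toNat
              have := hc1 i
              omega
            · intro a _ b _ h
              exact Fin.ext h
        _ = (c i).toNat := Finset.card_range _
  have hmain : (Finset.univ.filter fun q : Fin d → Fin m => P q ∈ AL m x L).card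
      ≤ ∏ i, (T i).card := by
    calc _ ≤ (Fintype.piFinset T).card := Finset.card_le_card hsub
      _ = ∏ i, (T i).card := Fintype.card_piFinset T
  constructor
  · calc ((Finset.univ.filter fun q : Fin d → Fin m => P q ∈ AL m x L).card : ℤ)
        ≤ ((∏ i, (T i).card : ℕ) : ℤ) := by exact_mod_cast hmain
      _ = ∏ i, ((T i).card : ℤ) := by push_cast; ring
      _ ≤ ∏ j, if L j = false then cidx m (x j) else 1 := by
          apply Finset.prod_le_prod
          · intro i _; positivity
          · intro i _
            by_cases hL : L i = true
            · have h1 : (T i).card ≤ 1 := by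
                have := hcard i; have := hc1 i
                -- need card ≤ 1 in the true case directly
                simp only [hT, if_pos hL]
                apply Finset.card_le_one.2
                intro a ha b hb
                rw [Finset.mem_filter] at ha hb
                have : (a:ℤ) = (b:ℤ) := by omega
                exact Fin.ext (by exact_mod_cast this)
              simp [hL]
              exact_mod_cast h1
            · have := hcard i
              have := hc1 i
              simp only [hL, Bool.not_eq_true] at *
              simp only [if_pos]
              calc ((T i).card : ℤ) ≤ ((c i).toNat : ℤ) := by exact_mod_cast hcard i
                _ = c i := Int.toNat_of_nonneg (by omega)
  · calc (Finset.univ.filter fun q : Fin d → Fin m => P q ∈ AL m x L).card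
        ≤ ∏ i, (T i).card := hmain
      _ ≤ ∏ i, (if L i = true then 1 else m) := by
          apply Finset.prod_le_prod (fun _ _ => Nat.zero_le _)
          intro i _
          by_cases hL : L i = true
          · rw [if_pos hL]
            simp only [hT, if_pos hL]
            apply Finset.card_le_one.2
            intro a ha b hb
            rw [Finset.mem_filter] at ha hb
            have : (a:ℤ) = (b:ℤ) := by omega
            exact Fin.ext (by exact_mod_cast this)
          · rw [if_neg hL]
            calc (T i).card ≤ (Finset.univ : Finset (Fin m)).card := Finset.card_le_univ _
              _ = m := by simp
      _ = m ^ (d - (Finset.univ.filter fun i => L i = true).card) := by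
          rw [Finset.prod_ite]
          simp only [Finset.prod_const, one_pow, one_mul]
          congr 1
          have := Finset.card_filter_add_card_filter_not
            (s := (Finset.univ : Finset (Fin d))) (p := fun i => L i = true)
          simp only [Finset.card_univ, Fintype.card_fin] at this
          omega
end
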